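/- Let Ω_n(m) denote the number of sequences (a_1,…,a_n) ∈ {1,…,m}^n with a_1 ≤ a_2 ≥ a_3 ≤ a_4 ≥ ⋯, with Ω_0(m) = 1. Then for all n ≥ 2 and m ≥ 1: Ω_n(m) = Ω_n(m−1) + Ω_{n−2}(m) + Σ_{0 ≤ j ≤ (n−2)/2} Ω_{2j+1}(m−1)·Ω_{n−2−2j}(m), where Ω_n(0) = 0 for n ≥ 1 and Ω_0(0)=1. -/

import Mathlib

set_option linter.unnecessarySeqFocus false

/-- `f : [n] → {1,…,m}` is a zig-zag sequence: `f(1) ≤ f(2) ≥ f(3) ≤ f(4) ≥ ⋯`. -/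
def IsZigZagSeq {n m : ℕ} (f : Fin n → Fin m) : Prop :=
  ∀ (i : ℕ) (h : i + 1 < n),
    (i % 2 = 0 → f ⟨i, Nat.lt_of_succ_lt h⟩ ≤ f ⟨i + 1, h⟩) ∧
    (i % 2 = 1 → f ⟨i + 1, h⟩ ≤ f ⟨i, Nat.lt_of_succ_lt h⟩)

/-- The zig-zag order polynomial `Ω_n(m)`: the number of zig-zag sequences of length `n`
with entries in `{1,…,m}`. In particular `Ω_0(m) = 1` and `Ω_n(0) = 0` for `n ≥ 1`. -/
noncomputable def zzOmega (n m : ℕ) : ℕ :=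
  Set.ncard {f : Fin n → Fin m | IsZigZagSeq f}

lemma fin_congr {N M : ℕ} (f : Fin N → Fin M) {a b : ℕ} (hab : a = b) (ha : a < N) :
    f ⟨a, ha⟩ = f ⟨b, hab ▸ ha⟩ := by subst hab; rfl

def extA {n m' : ℕ} (g : Fin n → Fin m') : Fin n → Fin (m' + 1) :=
  fun i => (g i).castSucc

def extB {n' m' : ℕ} (h : Fin n' → Fin (m' + 1)) : Fin (n' + 2) → Fin (m' + 1) :=
  fun i => if hi : (i : ℕ) < 2 then Fin.last m'
    else h ⟨(i : ℕ) - 2, by have := i.isLt; omega⟩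

lemma extB_lt {n' m' : ℕ} (h : Fin n' → Fin (m' + 1)) {i : ℕ} (hi : i < n' + 2) (h1 : i < 2) :
    extB h ⟨i, hi⟩ = Fin.last m' := by simp [extB, h1]

lemma extB_ge {n' m' : ℕ} (h : Fin n' → Fin (m' + 1)) {i : ℕ} (hi : i < n' + 2) (h1 : 2 ≤ i) :
    extB h ⟨i, hi⟩ = h ⟨i - 2, by omega⟩ := by
  simp only [extB]; rw [dif_neg (by simpa using by omega : ¬ ((⟨i, hi⟩ : Fin (n' + 2)) : ℕ) < 2)]

def extC {n' m' : ℕ} (j : ℕ) (hj : 2 * j ≤ n') (g : Fin (2 * j + 1) → Fin m')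
    (h : Fin (n' - 2 * j) → Fin (m' + 1)) : Fin (n' + 2) → Fin (m' + 1) :=
  fun i => if h1 : (i : ℕ) < 2 * j + 1 then (g ⟨(i : ℕ), h1⟩).castSucc
    else if h2 : (i : ℕ) = 2 * j + 1 then Fin.last m'
    else h ⟨(i : ℕ) - (2 * j + 2), by have := i.isLt; omega⟩

lemma extC_lt {n' m' : ℕ} (j : ℕ) (hj : 2 * j ≤ n') (g : Fin (2 * j + 1) → Fin m')
    (h : Fin (n' - 2 * j) → Fin (m' + 1)) {i : ℕ} (hi : i < n' + 2) (h1 : i < 2 * j + 1) :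
    extC j hj g h ⟨i, hi⟩ = (g ⟨i, h1⟩).castSucc := by
  simp only [extC]; rw [dif_pos h1]

lemma extC_eq {n' m' : ℕ} (j : ℕ) (hj : 2 * j ≤ n') (g : Fin (2 * j + 1) → Fin m')
    (h : Fin (n' - 2 * j) → Fin (m' + 1)) {i : ℕ} (hi : i < n' + 2) (h1 : i = 2 * j + 1) :
    extC j hj g h ⟨i, hi⟩ = Fin.last m' := by
  simp only [extC]; rw [dif_neg (by omega), dif_pos h1]

lemma extC_gt {n' m' : ℕ} (j : ℕ) (hj : 2 * j ≤ n') (g : Fin (2 * j + 1) → Fin m')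
    (h : Fin (n' - 2 * j) → Fin (m' + 1)) {i : ℕ} (hi : i < n' + 2) (h1 : 2 * j + 2 ≤ i) :
    extC j hj g h ⟨i, hi⟩ = h ⟨i - (2 * j + 2), by omega⟩ := by
  simp only [extC]; rw [dif_neg (by omega), dif_neg (by omega)]

lemma zz_extA {n m' : ℕ} {g : Fin n → Fin m'} (hg : IsZigZagSeq g) : IsZigZagSeq (extA g) := by
  intro i h
  have H := hg i h
  constructor
  · intro hi; exact Fin.castSucc_le_castSucc_iff.mpr (H.1 hi)
  · intro hi; exact Fin.castSucc_le_castSucc_iff.mpr (H.2 hi)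

lemma zz_extB {n' m' : ℕ} {h : Fin n' → Fin (m' + 1)} (hh : IsZigZagSeq h) :
    IsZigZagSeq (extB h) := by
  intro i hi
  constructor
  · intro hpar
    by_cases h0 : i = 0
    · subst h0; simp [extB]
    · have h2 : 2 ≤ i := by omega
      have H := (hh (i - 2) (by omega)).1 (by omega)
      rw [extB_ge h _ h2, extB_ge h _ (by omega), fin_congr h (show i + 1 - 2 = (i - 2) + 1 by omega)]
      exact H
  · intro hpar
    by_cases h1 : i = 1
    · subst h1
      rw [show extB h ⟨1, by omega⟩ = Fin.last m' from extB_lt h _ (by omega)]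
      exact Fin.le_last _
    · have h3 : 3 ≤ i := by omega
      have H := (hh (i - 2) (by omega)).2 (by omega)
      rw [extB_ge h _ (by omega), extB_ge h _ (by omega), fin_congr h (show i + 1 - 2 = (i - 2) + 1 by omega)]
      exact H

lemma zz_extC {n' m' : ℕ} (j : ℕ) (hj : 2 * j ≤ n') {g : Fin (2 * j + 1) → Fin m'}
    {h : Fin (n' - 2 * j) → Fin (m' + 1)} (hg : IsZigZagSeq g) (hh : IsZigZagSeq h) :
    IsZigZagSeq (extC j hj g h) := by
  intro i hi
  constructor
  · intro hpar
    rcases lt_trichotomy (i + 1) (2 * j + 1) with hc | hc | hc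
    · have H := (hg i (by omega)).1 hpar
      rw [extC_lt j hj g h _ (by omega), extC_lt j hj g h _ (by omega)]
      exact Fin.castSucc_le_castSucc_iff.mpr H
    · rw [extC_lt j hj g h _ (by omega), extC_eq j hj g h _ (by omega)]
      exact Fin.le_last _
    · have h4 : 2 * j + 2 ≤ i := by omega
      have H := (hh (i - (2 * j + 2)) (by omega)).1 (by omega)
      rw [extC_gt j hj g h _ h4, extC_gt j hj g h _ (by omega),
        fin_congr h (show i + 1 - (2 * j + 2) = (i - (2 * j + 2)) + 1 by omega)]
      exact H
  · intro hpar
    rcases lt_trichotomy (i + 1) (2 * j + 1) with hc | hc | hc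
    · have H := (hg i (by omega)).2 hpar
      rw [extC_lt j hj g h _ (by omega), extC_lt j hj g h _ (by omega)]
      exact Fin.castSucc_le_castSucc_iff.mpr H
    · omega
    · by_cases hc2 : i = 2 * j + 1
      · rw [extC_eq j hj g h _ hc2]
        exact Fin.le_last _
      · have h4 : 2 * j + 2 ≤ i := by omega
        have H := (hh (i - (2 * j + 2)) (by omega)).2 (by omega)
        rw [extC_gt j hj g h _ h4, extC_gt j hj g h _ (by omega),
          fin_congr h (show i + 1 - (2 * j + 2) = (i - (2 * j + 2)) + 1 by omega)]
        exact H

lemma zzOmega_eq (n m : ℕ) : zzOmega n m = Nat.card {f : Fin n → Fin m // IsZigZagSeq f} := rfl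

lemma zz_of_val {N M M' : ℕ} {f : Fin N → Fin M} {g : Fin N → Fin M'}
    (hval : ∀ t, ((g t : ℕ)) = ((f t : ℕ))) (hf : IsZigZagSeq f) : IsZigZagSeq g := by
  intro i h
  have H := hf i h
  constructor
  · intro hi
    have := H.1 hi
    rw [Fin.le_def] at this ⊢
    rw [hval, hval]; exact this
  · intro hi
    have := H.2 hi
    rw [Fin.le_def] at this ⊢
    rw [hval, hval]; exact this

lemma zz_shift {N M : ℕ} {f : Fin N → Fin M} (hf : IsZigZagSeq f) (c K : ℕ)
    (hc : c % 2 = 0) (hK : c + K ≤ N) :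
    IsZigZagSeq (fun t : Fin K => f ⟨c + t, by have := t.isLt; omega⟩) := by
  intro i h
  have H := hf (c + i) (by omega)
  constructor
  · intro hi
    have := H.1 (by omega)
    simpa [Nat.add_assoc] using this
  · intro hi
    have := H.2 (by omega)
    simpa [Nat.add_assoc] using this

lemma val_lt_of_ne_last {m' : ℕ} {x : Fin (m' + 1)} (hx : x ≠ Fin.last m') : (x : ℕ) < m' := by
  have h1 := x.isLt
  rcases Nat.lt_or_ge (x : ℕ) m' with h | h
  · exact h
  · exact absurd (Fin.ext (by simp [Fin.last]; omega) : x = Fin.last m') hx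

lemma castSucc_ne_last {m' : ℕ} (x : Fin m') : Fin.castSucc x ≠ Fin.last m' := by
  intro hx
  have h1 := x.isLt
  rw [Fin.ext_iff] at hx
  simp at hx
  omega

def zzC (n' m' : ℕ) : Type :=
  Σ j : Fin (n' / 2 + 1),
    {g : Fin (2 * (j : ℕ) + 1) → Fin m' // IsZigZagSeq g} ×
    {h : Fin (n' - 2 * (j : ℕ)) → Fin (m' + 1) // IsZigZagSeq h}

lemma two_mul_le {n' : ℕ} (j : Fin (n' / 2 + 1)) : 2 * (j : ℕ) ≤ n' := by
  have := j.isLt; omega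

def Phi (n' m' : ℕ) :
    ({g : Fin (n' + 2) → Fin m' // IsZigZagSeq g} ⊕
      {h : Fin n' → Fin (m' + 1) // IsZigZagSeq h} ⊕ zzC n' m') →
    {f : Fin (n' + 2) → Fin (m' + 1) // IsZigZagSeq f}
  | .inl ⟨g, hg⟩ => ⟨extA g, zz_extA hg⟩
  | .inr (.inl ⟨h, hh⟩) => ⟨extB h, zz_extB hh⟩
  | .inr (.inr ⟨j, ⟨g, hg⟩, ⟨h, hh⟩⟩) =>
      ⟨extC (j : ℕ) (two_mul_le j) g h, zz_extC _ _ hg hh⟩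

lemma Phi_inl {n' m' : ℕ} (g : Fin (n' + 2) → Fin m') (hg : IsZigZagSeq g) :
    Phi n' m' (.inl ⟨g, hg⟩) = ⟨extA g, zz_extA hg⟩ := rfl

lemma Phi_inrB {n' m' : ℕ} (h : Fin n' → Fin (m' + 1)) (hh : IsZigZagSeq h) :
    Phi n' m' (.inr (.inl ⟨h, hh⟩)) = ⟨extB h, zz_extB hh⟩ := rfl

lemma Phi_inrC {n' m' : ℕ} (j : Fin (n' / 2 + 1)) (g) (hg) (h) (hh) :
    Phi n' m' (.inr (.inr ⟨j, ⟨g, hg⟩, ⟨h, hh⟩⟩)) =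
      ⟨extC (j : ℕ) (two_mul_le j) g h, zz_extC _ _ hg hh⟩ := rfl

lemma Phi_inj (n' m' : ℕ) : Function.Injective (Phi n' m') := by
  intro a b hab
  have hfe := congrArg Subtype.val hab
  rcases a with ⟨g, hg⟩ | ⟨h, hh⟩ | ⟨j, ⟨g, hg⟩, ⟨h, hh⟩⟩ <;>
    rcases b with ⟨g', hg'⟩ | ⟨h', hh'⟩ | ⟨j', ⟨g', hg'⟩, ⟨h', hh'⟩⟩ <;>
    simp only [Phi] at hfe
  · -- A A
    have : g = g' := by
      funext i
      exact Fin.castSucc_injective _ (congrFun hfe i)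
    subst this; rfl
  · -- A B
    exfalso
    have := congrFun hfe ⟨0, by omega⟩
    rw [extB_lt h' _ (by omega)] at this
    exact castSucc_ne_last _ this
  · -- A C
    exfalso
    have hj := two_mul_le j'
    have := congrFun hfe ⟨2 * (j' : ℕ) + 1, by omega⟩
    rw [extC_eq _ _ g' h' _ rfl] at this
    exact castSucc_ne_last _ this
  · -- B A
    exfalso
    have := congrFun hfe ⟨0, by omega⟩
    rw [extB_lt h _ (by omega)] at this
    exact castSucc_ne_last _ this.symm
  · -- B B
    have : h = h' := by
      funext t
      have := congrFun hfe ⟨(t : ℕ) + 2, by have := t.isLt; omega⟩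
      rw [extB_ge h _ (by omega), extB_ge h' _ (by omega)] at this
      simpa [fin_congr h (show (t : ℕ) + 2 - 2 = (t : ℕ) by omega),
        fin_congr h' (show (t : ℕ) + 2 - 2 = (t : ℕ) by omega)] using this
    subst this; rfl
  · -- B C
    exfalso
    have hj := two_mul_le j'
    have := congrFun hfe ⟨0, by omega⟩
    rw [extB_lt h _ (by omega), extC_lt _ _ g' h' _ (by omega)] at this
    exact castSucc_ne_last _ this.symm
  · -- C A
    exfalso
    have hj := two_mul_le j
    have := congrFun hfe ⟨2 * (j : ℕ) + 1, by omega⟩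
    rw [extC_eq _ _ g h _ rfl] at this
    exact castSucc_ne_last _ this.symm
  · -- C B
    exfalso
    have hj := two_mul_le j
    have := congrFun hfe ⟨0, by omega⟩
    rw [extB_lt h' _ (by omega), extC_lt _ _ g h _ (by omega)] at this
    exact castSucc_ne_last _ this
  · -- C C
    have hj := two_mul_le j
    have hj' := two_mul_le j'
    have hjj : (j : ℕ) = (j' : ℕ) := by
      by_contra hne
      rcases Nat.lt_or_ge (j : ℕ) (j' : ℕ) with hlt | hge
      · have := congrFun hfe ⟨2 * (j : ℕ) + 1, by omega⟩
        rw [extC_eq _ _ g h _ rfl, extC_lt _ _ g' h' _ (by omega)] at this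
        exact castSucc_ne_last _ this.symm
      · have hlt : (j' : ℕ) < (j : ℕ) := by omega
        have := congrFun hfe ⟨2 * (j' : ℕ) + 1, by omega⟩
        rw [extC_eq _ _ g' h' _ rfl, extC_lt _ _ g h _ (by omega)] at this
        exact castSucc_ne_last _ this
    have hj2 : j = j' := Fin.ext hjj
    subst hj2
    have hgg : g = g' := by
      funext t
      have ht := t.isLt
      have := congrFun hfe ⟨(t : ℕ), by omega⟩
      rw [extC_lt _ _ g h _ (by omega), extC_lt _ _ g' h' _ (by omega)] at this
      have := Fin.castSucc_injective _ this
      simpa using this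
    have hhh : h = h' := by
      funext t
      have ht := t.isLt
      have := congrFun hfe ⟨2 * (j : ℕ) + 2 + (t : ℕ), by omega⟩
      rw [extC_gt _ _ g h _ (by omega), extC_gt _ _ g' h' _ (by omega)] at this
      simpa [fin_congr h (show 2 * (j : ℕ) + 2 + (t : ℕ) - (2 * (j : ℕ) + 2) = (t : ℕ) by omega),
        fin_congr h' (show 2 * (j : ℕ) + 2 + (t : ℕ) - (2 * (j : ℕ) + 2) = (t : ℕ) by omega)]
        using this
    subst hgg; subst hhh; rfl

lemma zz_trunc {N K M : ℕ} (hK : K ≤ N) {f : Fin N → Fin M} (hf : IsZigZagSeq f) :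
    IsZigZagSeq (fun t : Fin K => f ⟨t, lt_of_lt_of_le t.isLt hK⟩) := by
  intro i h
  have H := hf i (by omega)
  constructor
  · intro hi; exact H.1 hi
  · intro hi; exact H.2 hi

lemma Phi_surj (n' m' : ℕ) : Function.Surjective (Phi n' m') := by
  rintro ⟨f, hf⟩
  classical
  by_cases hP : ∃ t : ℕ, ∃ ht : t < n' + 2, f ⟨t, ht⟩ = Fin.last m'
  · -- the top value is attained
    set k := Nat.find hP with hkdef
    obtain ⟨hklt, hkval⟩ := Nat.find_spec hP
    have hmin : ∀ t, t < k → ∀ ht : t < n' + 2, f ⟨t, ht⟩ ≠ Fin.last m' := by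
      intro t htk ht hcon; exact Nat.find_min hP htk ⟨ht, hcon⟩
    rcases Nat.eq_zero_or_pos k with hk0 | hkpos
    · -- k = 0 : f 0 = f 1 = last
      have hf0 : f ⟨0, by omega⟩ = Fin.last m' := by
        rw [fin_congr f (show (0 : ℕ) = k by omega)]; exact hkval
      have hf1 : f ⟨1, by omega⟩ = Fin.last m' := by
        have h01 := (hf 0 (by omega)).1 rfl
        rw [hf0] at h01
        exact le_antisymm (Fin.le_last _) h01
      let h0 : Fin n' → Fin (m' + 1) := fun t => f ⟨2 + (t : ℕ), by have := t.isLt; omega⟩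
      have hh0 : IsZigZagSeq h0 := zz_shift hf 2 n' rfl (by omega)
      refine ⟨.inr (.inl ⟨h0, hh0⟩), ?_⟩
      rw [Phi_inrB]
      refine Subtype.ext ?_
      show extB h0 = f
      funext i
      rcases i with ⟨iv, hiv⟩
      rcases Nat.lt_or_ge iv 2 with h2 | h2
      · rw [extB_lt _ _ h2]
        interval_cases iv
        · exact hf0.symm
        · exact hf1.symm
      · rw [extB_ge _ _ h2]
        show f ⟨2 + (iv - 2), by omega⟩ = f ⟨iv, hiv⟩
        rw [fin_congr f (show 2 + (iv - 2) = iv by omega)]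
    · -- k ≥ 1 : k must be odd
      have hkodd : k % 2 = 1 := by
        by_contra hke
        have hke' : k % 2 = 0 := by omega
        have hk2 : 2 ≤ k := by
          rcases Nat.lt_or_ge k 2 with h | h
          · interval_cases k <;> omega
          · exact h
        have H := (hf (k - 1) (by omega)).2 (by omega)
        rw [fin_congr f (show k - 1 + 1 = k by omega)] at H
        have : f ⟨k, by omega⟩ = Fin.last m' := by
          rw [fin_congr f (show k = k from rfl)]
          exact hkval
        rw [this] at H
        exact hmin (k - 1) (by omega) (by omega) (le_antisymm (Fin.le_last _) H)
      set j := k / 2 with hjdef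
      have hk2j : k = 2 * j + 1 := by omega
      have hjlt : j < n' / 2 + 1 := by omega
      have hjn : 2 * j ≤ n' := by omega
      let g : Fin (2 * j + 1) → Fin m' := fun t =>
        ⟨(f ⟨(t : ℕ), by have := t.isLt; omega⟩ : ℕ),
          val_lt_of_ne_last (hmin (t : ℕ) (by have := t.isLt; omega) _)⟩
      have hg : IsZigZagSeq g := zz_of_val (fun t => rfl) (zz_trunc (by omega) hf)
      let h : Fin (n' - 2 * j) → Fin (m' + 1) := fun t =>
        f ⟨2 * j + 2 + (t : ℕ), by have := t.isLt; omega⟩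
      have hh : IsZigZagSeq h :=
        zz_shift hf (2 * j + 2) (n' - 2 * j) (by omega) (by omega)
      refine ⟨.inr (.inr ⟨⟨j, hjlt⟩, ⟨g, hg⟩, ⟨h, hh⟩⟩), ?_⟩
      rw [Phi_inrC]
      refine Subtype.ext ?_
      show extC j hjn g h = f
      funext i
      rcases i with ⟨iv, hiv⟩
      rcases lt_trichotomy iv (2 * j + 1) with hc | hc | hc
      · rw [extC_lt _ _ _ _ _ hc]
        exact Fin.ext rfl
      · rw [extC_eq _ _ _ _ _ hc, fin_congr f (show iv = k by omega)]
        exact hkval.symm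
      · rw [extC_gt _ _ _ _ _ (by omega)]
        show f ⟨2 * j + 2 + (iv - (2 * j + 2)), by omega⟩ = f ⟨iv, hiv⟩
        rw [fin_congr f (show 2 * j + 2 + (iv - (2 * j + 2)) = iv by omega)]
  · -- top value never attained
    have hne : ∀ i : Fin (n' + 2), f i ≠ Fin.last m' := by
      intro i hi
      exact hP ⟨(i : ℕ), i.isLt, by rw [fin_congr f (show (i : ℕ) = (i : ℕ) from rfl)]; simpa using hi⟩
    let g0 : Fin (n' + 2) → Fin m' := fun i => ⟨(f i : ℕ), val_lt_of_ne_last (hne i)⟩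
    have hg0 : IsZigZagSeq g0 := zz_of_val (fun t => rfl) hf
    refine ⟨.inl ⟨g0, hg0⟩, ?_⟩
    rw [Phi_inl]
    refine Subtype.ext ?_
    show extA g0 = f
    funext i
    exact Fin.ext rfl

instance (n' m' : ℕ) : Finite (zzC n' m') := by
  unfold zzC; infer_instance

lemma nat_card_sigma {k : ℕ} (F : Fin k → Type*) [∀ i, Finite (F i)] :
    Nat.card (Σ i, F i) = ∑ i, Nat.card (F i) := by
  letI : ∀ i, Fintype (F i) := fun i => Fintype.ofFinite _
  simp [Nat.card_eq_fintype_card, Fintype.card_sigma]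

/-- for `n ≥ 2` and `m ≥ 1`,
`Ω_n(m) = Ω_n(m-1) + Ω_{n-2}(m) + Σ_{0 ≤ j ≤ (n-2)/2} Ω_{2j+1}(m-1)·Ω_{n-2-2j}(m)`. -/
theorem zzOmega_rec_one (n m : ℕ) (hn : 2 ≤ n) (hm : 1 ≤ m) :
    zzOmega n m = zzOmega n (m - 1) + zzOmega (n - 2) m +
      ∑ j ∈ Finset.range ((n - 2) / 2 + 1),
        zzOmega (2 * j + 1) (m - 1) * zzOmega (n - 2 - 2 * j) m := by
  obtain ⟨n', rfl⟩ : ∃ n', n = n' + 2 := ⟨n - 2, by omega⟩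
  obtain ⟨m', rfl⟩ : ∃ m', m = m' + 1 := ⟨m - 1, by omega⟩
  simp only [Nat.add_sub_cancel]
  have hcard := Nat.card_congr (Equiv.ofBijective _ ⟨Phi_inj n' m', Phi_surj n' m'⟩).symm
  rw [zzOmega_eq, hcard, Nat.card_sum, Nat.card_sum]
  have hsig : Nat.card (zzC n' m') =
      ∑ j ∈ Finset.range (n' / 2 + 1), zzOmega (2 * j + 1) m' * zzOmega (n' - 2 * j) (m' + 1) := by
    rw [show zzC n' m' = (Σ j : Fin (n' / 2 + 1),
      {g : Fin (2 * (j : ℕ) + 1) → Fin m' // IsZigZagSeq g} ×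
      {h : Fin (n' - 2 * (j : ℕ)) → Fin (m' + 1) // IsZigZagSeq h}) from rfl]
    rw [nat_card_sigma]
    rw [← Fin.sum_univ_eq_sum_range (fun j => zzOmega (2 * j + 1) m' * zzOmega (n' - 2 * j) (m' + 1))]
    congr 1
    funext j
    rw [Nat.card_prod, zzOmega_eq, zzOmega_eq]
  rw [hsig, zzOmega_eq, zzOmega_eq]
  ring
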